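/- If [c] ∈ H^p(X, 𝒪) and [c'] ∈ H^q(X, ℱ) are Čech cohomology classes represented by cocycles c, c' for a Leray cover 𝒱 with subordinate partition of unity (χα), then the Dolbeault-type representative of the cup product [c] ∪ [c'] given by Σ χ_{ν_{p+q}} ∂̄χ_{ν₀} ∧ ⋯ ∧ ∂̄χ_{ν_{p+q−1}} · c_{ν₀⋯ν_p} · c'_{ν_p⋯ν_{p+q}} equals the wedge product φ ∧ φ' of the individual Dolbeault representatives φ = Σ χ_{ν_p} ∂̄χ_{ν₀}∧⋯∧∂̄χ_{ν_{p−1}} c_{ν₀⋯ν_p} and φ' = Σ χ_{ν_q} ∂̄χ_{ν₀}∧⋯∧∂̄χ_{ν_{q−1}} ∧ c'_{ν₀⋯ν_q}, where sums are over all multi-indices. -/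

import Mathlib

open Function

/-- The ordered product `∂̄χ_{ν₀} ∧ ⋯ ∧ ∂̄χ_{ν_{m−1}}` of the `(0,1)`-forms `d ν_i`
attached to a multi-index `ν : Fin (m+1) → ι` (the last index is not differentiated). -/
def prodDbar {ι Λ : Type*} [Monoid Λ] {m : ℕ} (d : ι → Λ) (ν : Fin (m + 1) → ι) : Λ :=
  (List.ofFn fun i : Fin m => d (ν i.castSucc)).prod

/-- Alternating Čech cochains. -/
def IsAltCech {ι M : Type*} [AddCommGroup M] {m : ℕ} (c : (Fin m → ι) → M) : Prop :=
  ∀ (v : Fin m → ι) (σ : Equiv.Perm (Fin m)), c (v ∘ σ) = (Equiv.Perm.sign σ : ℤ) • c v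

/-- Čech cocycle condition `δc = 0`. -/
def IsCocycle {ι M : Type*} [AddCommGroup M] {m : ℕ} (c : (Fin (m + 1) → ι) → M) : Prop :=
  ∀ v : Fin (m + 2) → ι,
    ∑ i : Fin (m + 2), ((-1 : ℤ) ^ (i : ℕ)) • c (fun j => v (i.succAbove j)) = 0

section auxcup

set_option linter.unusedSectionVars false

variable {Λ : Type*} [Ring Λ] {β : Type*} [Fintype β]

lemma insertNth_succ_eq {m : ℕ} (i' : Fin (m + 1)) (x : Λ) (e : Fin (m + 1) → Λ) :
    Fin.insertNth i'.succ x e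
      = Fin.cons (α := fun _ => Λ) (e 0)
          (Fin.insertNth (α := fun _ => Λ) i' x fun j => e j.succ) := by
  funext j
  induction j using Fin.cases with
  | zero =>
    rw [Fin.cons_zero]
    have h0 : (0 : Fin (m + 2)) = i'.succ.succAbove 0 := (Fin.succ_succAbove_zero i').symm
    rw [h0, Fin.insertNth_apply_succAbove]
  | succ j' =>
    rw [Fin.cons_succ]
    rcases eq_or_ne j' i' with rfl | hne
    · rw [Fin.insertNth_apply_same, Fin.insertNth_apply_same]
    · obtain ⟨k, rfl⟩ := Fin.exists_succAbove_eq hne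
      rw [Fin.insertNth_apply_succAbove, ← Fin.succ_succAbove_succ,
        Fin.insertNth_apply_succAbove]

lemma sum_prod_insertNth (dd : β → Λ) (hdd : ∑ t : β, dd t = 0) :
    ∀ (n : ℕ) (i : Fin (n + 1)) (e : Fin n → Λ),
      ∑ t : β, (List.ofFn (i.insertNth (α := fun _ => Λ) (dd t) e)).prod = 0 := by
  intro n
  induction n with
  | zero =>
    intro i e
    have hi : i = 0 := Fin.ext (by omega)
    subst hi
    simp only [Fin.insertNth_zero', List.ofFn_cons, List.prod_cons,
      List.ofFn_zero, List.prod_nil, mul_one]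
    exact hdd
  | succ m ih =>
    intro i e
    induction i using Fin.cases with
    | zero =>
      simp only [Fin.insertNth_zero', List.ofFn_cons, List.prod_cons]
      rw [← Finset.sum_mul, hdd, zero_mul]
    | succ i' =>
      simp only [insertNth_succ_eq, List.ofFn_cons, List.prod_cons]
      rw [← Finset.mul_sum, ih i' fun j => e j.succ, mul_zero]

lemma comp_insertNth' {γ δ : Type*} (f : γ → δ) {n : ℕ} (i : Fin (n + 1)) (x : γ)
    (ρ : Fin n → γ) :
    (fun j => f (Fin.insertNth (α := fun _ => γ) i x ρ j))
      = Fin.insertNth (α := fun _ => δ) i (f x) fun j => f (ρ j) := by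
  funext j
  rcases eq_or_ne j i with rfl | hne
  · rw [Fin.insertNth_apply_same, Fin.insertNth_apply_same]
  · obtain ⟨k, rfl⟩ := Fin.exists_succAbove_eq hne
    rw [Fin.insertNth_apply_succAbove, Fin.insertNth_apply_succAbove]

variable {A : Type*} [CommRing A] [Algebra A Λ]

lemma cross_zero (dd : β → Λ) (hdd : ∑ t : β, dd t = 0)
    {m : ℕ} (i : Fin m) (F : (Fin m → β) → A)
    (hF : ∀ σ τ : Fin m → β, (∀ j, j ≠ i → σ j = τ j) → F σ = F τ) :
    ∑ σ : Fin m → β, algebraMap A Λ (F σ) * (List.ofFn fun j => dd (σ j)).prod = 0 := by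
  cases m with
  | zero => exact i.elim0
  | succ n =>
    cases isEmpty_or_nonempty β with
    | inl h =>
      haveI : IsEmpty (Fin (n + 1) → β) := ⟨fun f => (h.false (f 0))⟩
      simp
    | inr h =>
      obtain ⟨t₀⟩ := h
      rw [← Equiv.sum_comp (Fin.insertNthEquiv (fun _ => β) i)
        (fun σ => algebraMap A Λ (F σ) * (List.ofFn fun j => dd (σ j)).prod),
        Fintype.sum_prod_type, Finset.sum_comm]
      refine Finset.sum_eq_zero fun ρ _ => ?_
      have h1 : ∀ t : β,
          algebraMap A Λ (F ((Fin.insertNthEquiv (fun _ => β) i) (t, ρ)))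
            * (List.ofFn fun j => dd ((Fin.insertNthEquiv (fun _ => β) i) (t, ρ) j)).prod
          = algebraMap A Λ (F (Fin.insertNth i t₀ ρ))
            * (List.ofFn (Fin.insertNth (α := fun _ => Λ) i (dd t) fun j => dd (ρ j))).prod := by
        intro t
        simp only [Fin.insertNthEquiv_apply]
        congr 1
        · refine congrArg _ (hF _ _ fun j hj => ?_)
          obtain ⟨k, rfl⟩ := Fin.exists_succAbove_eq hj
          simp only [Fin.insertNthEquiv_apply]
          rw [Fin.insertNth_apply_succAbove, Fin.insertNth_apply_succAbove]
        · rw [comp_insertNth' dd i t ρ]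
      simp only [h1]
      rw [← Finset.mul_sum, sum_prod_insertNth dd hdd n i fun j => dd (ρ j), mul_zero]

lemma cocycle_expand {ι : Type*} {p : ℕ} (c : (Fin (p + 1) → ι) → A)
    (hccoc : IsCocycle c) (ν : Fin p → ι) (a b : ι) :
    c (Fin.snoc ν a) = c (Fin.snoc ν b)
      + (-1 : ℤ) ^ p • ∑ i : Fin p, ((-1 : ℤ) ^ (i : ℕ)) •
          c (fun j => (Fin.snoc (Fin.snoc ν a) b : Fin (p + 2) → ι)
              ((i.castSucc.castSucc).succAbove j)) := by
  have h := hccoc (Fin.snoc (Fin.snoc ν a) b)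
  rw [Fin.sum_univ_castSucc, Fin.sum_univ_castSucc] at h
  have hA : (fun j => (Fin.snoc (Fin.snoc ν a) b : Fin (p + 2) → ι)
      ((Fin.last (p + 1)).succAbove j)) = Fin.snoc ν a := by
    funext j
    rw [Fin.succAbove_last, Fin.snoc_castSucc]
  have hB : (fun j => (Fin.snoc (Fin.snoc ν a) b : Fin (p + 2) → ι)
      (((Fin.last p).castSucc).succAbove j)) = Fin.snoc ν b := by
    funext j
    induction j using Fin.lastCases with
    | last =>
      rw [Fin.succAbove_castSucc_self, Fin.succ_last, Fin.snoc_last, Fin.snoc_last]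
    | cast j₀ =>
      rw [Fin.succAbove_of_castSucc_lt, Fin.snoc_castSucc, Fin.snoc_castSucc,
        Fin.snoc_castSucc]
      simp only [Fin.lt_def, Fin.coe_castSucc, Fin.val_last]
      exact j₀.isLt
  rw [hA, hB] at h
  simp only [Fin.coe_castSucc, Fin.val_last] at h ⊢
  have hsq : (-1 : A) ^ p * (-1 : A) ^ p = 1 := by
    rw [← mul_pow]; norm_num
  simp only [zsmul_eq_mul, Int.cast_pow, Int.cast_neg, Int.cast_one] at h ⊢
  linear_combination (-(-1 : A) ^ p) * h - (c (Fin.snoc ν a) - c (Fin.snoc ν b)) * hsq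

lemma finsum_eq_sum_subtype {ι M : Type*} [AddCommMonoid M] {m : ℕ} (S : Finset ι)
    (F : (Fin m → ι) → M) (hF : ∀ ν, F ν ≠ 0 → ∀ i, ν i ∈ S) :
    ∑ᶠ ν : Fin m → ι, F ν = ∑ σ : Fin m → {x // x ∈ S}, F fun j => ↑(σ j) := by
  rw [finsum_eq_sum_of_support_subset F
    (s := Fintype.piFinset fun _ : Fin m => S)
    (fun ν hν => Fintype.mem_piFinset.mpr (hF ν hν))]
  exact Finset.sum_bij'
    (fun ν hν => fun j => (⟨ν j, Fintype.mem_piFinset.mp hν j⟩ : {x // x ∈ S}))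
    (fun σ _ => fun j => (σ j : ι))
    (fun ν hν => Finset.mem_univ _)
    (fun σ _ => Fintype.mem_piFinset.mpr fun j => (σ j).2)
    (fun ν hν => rfl) (fun σ _ => funext fun j => Subtype.ext rfl)
    (fun ν hν => rfl)

lemma snoc_snoc_apply_eq {γ : Type*} {p : ℕ} (f g : Fin p → γ) (x y : γ) (i : Fin p)
    (hfg : ∀ j, j ≠ i → f j = g j) (k : Fin (p + 2)) (hk : k ≠ i.castSucc.castSucc) :
    (Fin.snoc (Fin.snoc f x) y : Fin (p + 2) → γ) k
      = (Fin.snoc (Fin.snoc g x) y : Fin (p + 2) → γ) k := by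
  induction k using Fin.lastCases with
  | last => rw [Fin.snoc_last, Fin.snoc_last]
  | cast k₀ =>
    rw [Fin.snoc_castSucc, Fin.snoc_castSucc]
    induction k₀ using Fin.lastCases with
    | last => rw [Fin.snoc_last, Fin.snoc_last]
    | cast k₁ =>
      rw [Fin.snoc_castSucc, Fin.snoc_castSucc]
      exact hfg k₁ fun h => hk (by rw [h])

lemma lemA {ι : Type*} (χ : ι → A) (d : ι → Λ) (T : Finset ι)
    (hχs : ∑ α : {x // x ∈ T}, χ ↑α = 1) (hds : ∑ α : {x // x ∈ T}, d ↑α = 0)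
    {p : ℕ} (c : (Fin (p + 1) → ι) → A) (hccoc : IsCocycle c) (b : ι) :
    ∑ σ : Fin (p + 1) → {x // x ∈ T},
        algebraMap A Λ (χ ↑(σ (Fin.last p)) * c fun j => ↑(σ j))
          * (prodDbar d fun j => ↑(σ j))
      = ∑ ρ : Fin p → {x // x ∈ T},
          algebraMap A Λ (c (Fin.snoc (fun j => ↑(ρ j)) b))
            * (List.ofFn fun i : Fin p => d ↑(ρ i)).prod := by
  classical
  rw [← Equiv.sum_comp (Fin.insertNthEquiv (fun _ => {x // x ∈ T}) (Fin.last p))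
      (fun σ => algebraMap A Λ (χ ↑(σ (Fin.last p)) * c fun j => ↑(σ j))
        * (prodDbar d fun j => ↑(σ j))),
    Fintype.sum_prod_type]
  have hsnoc : ∀ (a : {x // x ∈ T}) (ρ : Fin p → {x // x ∈ T}),
      (fun j => (((Fin.insertNthEquiv (fun _ => {x // x ∈ T}) (Fin.last p)) (a, ρ) j : ι)))
        = Fin.snoc (fun j => ↑(ρ j)) (↑a : ι) := by
    intro a ρ
    funext j
    simp only [Fin.insertNthEquiv_apply, Fin.insertNth_last']
    induction j using Fin.lastCases with
    | last => rw [Fin.snoc_last, Fin.snoc_last]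
    | cast j₀ => rw [Fin.snoc_castSucc, Fin.snoc_castSucc]
  have hlast : ∀ (a : {x // x ∈ T}) (ρ : Fin p → {x // x ∈ T}),
      ((Fin.insertNthEquiv (fun _ => {x // x ∈ T}) (Fin.last p)) (a, ρ)) (Fin.last p)
        = a := by
    intro a ρ
    simp only [Fin.insertNthEquiv_apply, Fin.insertNth_apply_same]
  have hD : ∀ (g : Fin p → ι) (x : ι),
      prodDbar d (Fin.snoc g x) = (List.ofFn fun i : Fin p => d (g i)).prod := by
    intro g x
    simp only [prodDbar, Fin.snoc_castSucc]
  simp only [hsnoc, hlast, hD]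
  have key : ∀ (a : {x // x ∈ T}) (ρ : Fin p → {x // x ∈ T}),
      algebraMap A Λ (χ ↑a * c (Fin.snoc (fun j => ↑(ρ j)) ↑a))
          * (List.ofFn fun i : Fin p => d ↑(ρ i)).prod
        = algebraMap A Λ (χ ↑a)
            * (algebraMap A Λ (c (Fin.snoc (fun j => ↑(ρ j)) b))
              * (List.ofFn fun i : Fin p => d ↑(ρ i)).prod)
          + ∑ i : Fin p, ((-1 : ℤ) ^ p * (-1 : ℤ) ^ (i : ℕ)) •
              (algebraMap A Λ (χ ↑a)
                * (algebraMap A Λ (c fun j =>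
                    (Fin.snoc (Fin.snoc (fun j' => (↑(ρ j') : ι)) ↑a) b : Fin (p + 2) → ι)
                      ((i.castSucc.castSucc).succAbove j))
                  * (List.ofFn fun i : Fin p => d ↑(ρ i)).prod)) := by
    intro a ρ
    rw [cocycle_expand c hccoc (fun j => ↑(ρ j)) (↑a) b, map_mul, map_add, mul_add, add_mul]
    congr 1
    · rw [mul_assoc]
    · simp only [map_zsmul, map_sum, Finset.mul_sum, Finset.sum_mul, Finset.smul_sum,
        smul_mul_assoc, mul_smul_comm, smul_smul, mul_assoc]
  simp only [key]
  simp only [Finset.sum_add_distrib]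
  have hone : ∑ a : {x // x ∈ T}, algebraMap A Λ (χ ↑a) = 1 := by
    rw [← map_sum, hχs, map_one]
  have part2 : (∑ a : {x // x ∈ T}, ∑ ρ : Fin p → {x // x ∈ T},
      ∑ i : Fin p, ((-1 : ℤ) ^ p * (-1 : ℤ) ^ (i : ℕ)) •
        (algebraMap A Λ (χ ↑a)
          * (algebraMap A Λ (c fun j =>
              (Fin.snoc (Fin.snoc (fun j' => (↑(ρ j') : ι)) ↑a) b : Fin (p + 2) → ι)
                ((i.castSucc.castSucc).succAbove j))
            * (List.ofFn fun i : Fin p => d ↑(ρ i)).prod))) = 0 := by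
    refine Finset.sum_eq_zero fun a _ => ?_
    rw [Finset.sum_comm]
    refine Finset.sum_eq_zero fun i _ => ?_
    have hz := cross_zero (A := A) (fun t : {x // x ∈ T} => d ↑t) hds i
      (fun ρ : Fin p → {x // x ∈ T} => c fun j =>
        (Fin.snoc (Fin.snoc (fun j' => (↑(ρ j') : ι)) ↑a) b : Fin (p + 2) → ι)
          ((i.castSucc.castSucc).succAbove j))
      (fun ρ τ hρτ => congrArg c (funext fun j =>
        snoc_snoc_apply_eq _ _ _ _ i
          (fun j' hj' => congrArg Subtype.val (hρτ j' hj')) _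
          (Fin.succAbove_ne _ _)))
    simp only [← smul_mul_assoc]
    rw [← Finset.mul_sum, hz, mul_zero]
  rw [part2, add_zero, Finset.sum_comm]
  refine Finset.sum_congr rfl fun ρ _ => ?_
  rw [← Finset.sum_mul, hone, one_mul]
end auxcup

/-- Compatibility of the explicit Čech-to-Dolbeault map with the cup product: working in
the (graded-commutative) algebra `Λ` of forms over the ring `A` of functions, with
partition of unity `χ` (`Σχ_α = 1`), anticommuting `(0,1)`-forms `d α = ∂̄χ_α`
(`Σ d α = 0`), and alternating cocycles `c ∈ C^p(𝒱,𝒪)`, `c' ∈ C^q(𝒱,ℱ)`, the wedge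
`φ ∧ φ'` of the Dolbeault representatives
`φ = Σ χ_{ν_p} ∂̄χ_{ν₀}∧⋯∧∂̄χ_{ν_{p−1}} c_{ν₀⋯ν_p}` and
`φ' = Σ χ_{ν_q} ∂̄χ_{ν₀}∧⋯∧∂̄χ_{ν_{q−1}} ∧ c'_{ν₀⋯ν_q}` equals the Dolbeault
representative of the cup product `c ∪ c'`. -/
theorem cech_dolbeault_cup_product {ι A Λ : Type*} [CommRing A] [Ring Λ] [Algebra A Λ]
    (χ : ι → A) (d : ι → Λ)
    (hχfin : (Function.support χ).Finite) (hdfin : (Function.support d).Finite)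
    (hχsum : ∑ᶠ α : ι, χ α = 1) (hdsum : ∑ᶠ α : ι, d α = 0)
    (hanti : ∀ α β : ι, d α * d β = -(d β * d α))
    (p q : ℕ)
    (c : (Fin (p + 1) → ι) → A) (c' : (Fin (q + 1) → ι) → Λ)
    (hcalt : IsAltCech c) (hc'alt : IsAltCech c')
    (hccoc : IsCocycle c) (hc'coc : IsCocycle c') :
    (∑ᶠ ν : Fin (p + 1) → ι,
        algebraMap A Λ (χ (ν (Fin.last p)) * c ν) * prodDbar d ν)
      * (∑ᶠ ν : Fin (q + 1) → ι,
        algebraMap A Λ (χ (ν (Fin.last q))) * prodDbar d ν * c' ν)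
      = ∑ᶠ ν : Fin (p + q + 1) → ι,
          algebraMap A Λ
              (χ (ν (Fin.last (p + q)))
                * c (fun i : Fin (p + 1) => ν (Fin.castLE (by omega) i)))
            * prodDbar d ν
            * c' (fun i : Fin (q + 1) => ν ⟨p + (i : ℕ), by omega⟩) := by
  classical
  set T : Finset ι := (hχfin.union hdfin).toFinset with hTdef
  have hχT : ∀ α, χ α ≠ 0 → α ∈ T := fun α h => (Set.Finite.mem_toFinset _).mpr (Or.inl h)
  have hdT : ∀ α, d α ≠ 0 → α ∈ T := fun α h => (Set.Finite.mem_toFinset _).mpr (Or.inr h)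
  have hχs : ∑ α : {x // x ∈ T}, χ ↑α = 1 := by
    rw [Finset.sum_coe_sort T χ,
      ← finsum_eq_sum_of_support_subset χ fun α h => Finset.mem_coe.mpr (hχT α h)]
    exact hχsum
  have hds : ∑ α : {x // x ∈ T}, d ↑α = 0 := by
    rw [Finset.sum_coe_sort T d,
      ← finsum_eq_sum_of_support_subset d fun α h => Finset.mem_coe.mpr (hdT α h)]
    exact hdsum
  have hprod0 : ∀ {m : ℕ} (ν : Fin (m + 1) → ι) (i₀ : Fin m),
      d (ν i₀.castSucc) = 0 → prodDbar d ν = 0 := by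
    intro m ν i₀ h0
    exact List.prod_eq_zero (List.mem_ofFn.mpr ⟨i₀, h0⟩)
  rw [finsum_eq_sum_subtype T _ (fun ν hne => by
      intro i
      induction i using Fin.lastCases with
      | last => exact hχT _ fun h0 => hne (by rw [h0, zero_mul, map_zero, zero_mul])
      | cast i₀ => exact hdT _ fun h0 => hne (by rw [hprod0 ν i₀ h0, mul_zero]))]
  rw [finsum_eq_sum_subtype T _ (fun ν hne => by
      intro i
      induction i using Fin.lastCases with
      | last => exact hχT _ fun h0 => hne (by rw [h0, map_zero, zero_mul, zero_mul])
      | cast i₀ => exact hdT _ fun h0 => hne (by rw [hprod0 ν i₀ h0, mul_zero, zero_mul]))]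
  rw [finsum_eq_sum_subtype T _ (fun ν hne => by
      intro i
      induction i using Fin.lastCases with
      | last => exact hχT _ fun h0 => hne (by rw [h0, zero_mul, map_zero, zero_mul, zero_mul])
      | cast i₀ => exact hdT _ fun h0 => hne (by rw [hprod0 ν i₀ h0, mul_zero, zero_mul]))]
  trans (∑ τ : Fin (q + 1) → {x // x ∈ T}, ∑ σ : Fin p → {x // x ∈ T},
      algebraMap A Λ (c (Fin.snoc (fun j => ↑(σ j)) ↑(τ 0)))
        * (List.ofFn fun i : Fin p => d ↑(σ i)).prod
        * (algebraMap A Λ (χ ↑(τ (Fin.last q)))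
          * (prodDbar d fun j => ↑(τ j)) * c' fun j => ↑(τ j)))
  · rw [Finset.mul_sum]
    refine Finset.sum_congr rfl fun τ _ => ?_
    rw [lemA χ d T hχs hds c hccoc ↑(τ 0), Finset.sum_mul]
  · refine Eq.trans ?_ (Equiv.sum_comp (Fin.appendEquiv p (q + 1))
      (fun ν : Fin (p + q + 1) → {x // x ∈ T} =>
        algebraMap A Λ (χ ↑(ν (Fin.last (p + q)))
            * c fun i : Fin (p + 1) => ↑(ν (Fin.castLE (by omega) i)))
          * (prodDbar d fun j => ↑(ν j))
          * c' fun i : Fin (q + 1) => ↑(ν ⟨p + (i : ℕ), by omega⟩)))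
    rw [Fintype.sum_prod_type]
    conv_rhs => rw [Finset.sum_comm]
    refine Finset.sum_congr rfl fun τ _ => Finset.sum_congr rfl fun σ _ => ?_
    simp only [Fin.appendEquiv_apply]
    have e1 : (Fin.append σ τ (Fin.last (p + q)) : {x // x ∈ T}) = τ (Fin.last q) := by
      rw [show (Fin.last (p + q) : Fin (p + q + 1)) = Fin.natAdd p (Fin.last q) from rfl,
        Fin.append_right]
    have e2 : (fun i : Fin (p + 1) =>
          ((Fin.append σ τ (Fin.castLE (by omega) i) : {x // x ∈ T}) : ι))
        = Fin.snoc (fun j => ↑(σ j)) (↑(τ 0) : ι) := by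
      funext i
      induction i using Fin.lastCases with
      | last =>
        rw [show Fin.castLE (by omega : p + 1 ≤ p + q + 1) (Fin.last p)
            = Fin.natAdd p (0 : Fin (q + 1)) from rfl, Fin.append_right, Fin.snoc_last]
      | cast i₀ =>
        rw [show Fin.castLE (by omega : p + 1 ≤ p + q + 1) (Fin.castSucc i₀)
            = Fin.castAdd (q + 1) i₀ from rfl, Fin.append_left, Fin.snoc_castSucc]
    have e3 : (prodDbar d fun j : Fin (p + q + 1) => ((Fin.append σ τ j : {x // x ∈ T}) : ι))
        = (List.ofFn fun i : Fin p => d ↑(σ i)).prod * (prodDbar d fun j => ↑(τ j)) := by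
      show (List.ofFn fun i : Fin (p + q) => d ↑(Fin.append σ τ i.castSucc)).prod = _
      rw [List.ofFn_add (f := fun i : Fin (p + q) => d ↑(Fin.append σ τ i.castSucc)),
        List.prod_append]
      congr 1
      · refine congrArg List.prod (congrArg List.ofFn (funext fun i => ?_))
        rw [show (Fin.castLE (by omega) i : Fin (p + q)).castSucc = Fin.castAdd (q + 1) i from rfl,
          Fin.append_left]
      · show _ = (List.ofFn fun j : Fin q => d ↑(τ j.castSucc)).prod
        refine congrArg List.prod (congrArg List.ofFn (funext fun j => ?_))
        rw [show (Fin.natAdd p j).castSucc = Fin.natAdd p j.castSucc from rfl, Fin.append_right]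
    have e4 : (fun i : Fin (q + 1) =>
          ((Fin.append σ τ ⟨p + (i : ℕ), by omega⟩ : {x // x ∈ T}) : ι))
        = fun i => (↑(τ i) : ι) := by
      funext i
      rw [show (⟨p + (i : ℕ), by omega⟩ : Fin (p + q + 1)) = Fin.natAdd p i from rfl,
        Fin.append_right]
    rw [e1, e2, e3, e4]
    rw [map_mul]
    have hXY : algebraMap A Λ (χ ↑(τ (Fin.last q)))
          * algebraMap A Λ (c (Fin.snoc (fun j => ↑(σ j)) ↑(τ 0)))
        = algebraMap A Λ (c (Fin.snoc (fun j => ↑(σ j)) ↑(τ 0)))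
          * algebraMap A Λ (χ ↑(τ (Fin.last q))) := by
      rw [← map_mul, ← map_mul, mul_comm]
    rw [hXY]
    simp only [mul_assoc]
    congr 1
    rw [← mul_assoc, ← Algebra.commutes, mul_assoc]
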